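/- Let (S_j)_{j=0}^{N-1} be a representation of the Cuntz algebra 𝒪_N on H, let f ∈ H with ‖f‖ = 1, let μ_f be a spectral measure of f on [0,1), and for each j = 0,…,N−1 let ν_j be a spectral measure of S_j^* f on [0,1). Then for every t ∈ ℝ, ∫_{[0,1)} e^{itx} dμ_f(x) = ∑_{j=0}^{N−1} e^{ijt/N} ∫_{[0,1)} e^{itx/N} dν_j(x). -/

import Mathlib

open MeasureTheory ContinuousLinearMap
open scoped InnerProductSpace

variable {H : Type*} [NormedAddCommGroup H] [InnerProductSpace ℂ H] [CompleteSpace H]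

/-- The word operator `S_α = S_{α 1} ⋯ S_{α k}` associated to a multi-index
`α ∈ {0,…,N-1}^k`. -/
noncomputable def Sw {N : ℕ} (S : Fin N → H →L[ℂ] H) {k : ℕ} (α : Fin k → Fin N) :
    H →L[ℂ] H :=
  (List.ofFn fun i => S (α i)).prod

/-- A family `S_0, …, S_{N-1}` of bounded operators is a representation of the Cuntz
algebra `𝒪_N` if `S_j^* S_k = δ_{jk} I` and `∑ j, S_j S_j^* = I`. -/
def CuntzRep {N : ℕ} (S : Fin N → H →L[ℂ] H) : Prop :=
  (∀ j k : Fin N, adjoint (S j) ∘L S k = if j = k then 1 else 0) ∧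
    ∑ j : Fin N, S j ∘L adjoint (S j) = 1

/-- `x_k(α) = α_1/N + α_2/N² + ⋯ + α_k/N^k`. -/
noncomputable def xk (N : ℕ) {k : ℕ} (α : Fin k → Fin N) : ℝ :=
  ∑ i : Fin k, (α i : ℝ) / (N : ℝ) ^ ((i : ℕ) + 1)

/-- The `N`-adic interval `I_k(α) = [x_k(α), x_k(α) + N^{-k})`. -/
noncomputable def Ik (N : ℕ) {k : ℕ} (α : Fin k → Fin N) : Set ℝ :=
  Set.Ico (xk N α) (xk N α + ((N : ℝ) ^ k)⁻¹)

/-- A Borel measure `μ` on `[0,1)` is a spectral measure of `g` if `μ([0,1)) = ‖g‖²`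
and `μ(I_k(α)) = ‖S_α^* g‖²` for every `k ≥ 1` and multi-index `α`. -/
def IsSpectralMeasureR {N : ℕ} (S : Fin N → H →L[ℂ] H) (g : H) (μ : Measure ℝ) : Prop :=
  μ (Set.Ico (0:ℝ) 1)ᶜ = 0 ∧ μ Set.univ = ENNReal.ofReal (‖g‖ ^ 2) ∧
    ∀ k : ℕ, 1 ≤ k → ∀ α : Fin k → Fin N,
      μ (Ik N α) = ENNReal.ofReal (‖adjoint (Sw S α) g‖ ^ 2)

namespace CuntzAux

lemma exp_I_lip (a b : ℝ) :
    ‖Complex.exp (Complex.I * a) - Complex.exp (Complex.I * b)‖ ≤ |a - b| := by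
  have key : ∀ θ : ℝ, ‖Complex.exp (Complex.I * θ) - 1‖ ≤ |θ| := by
    intro θ
    have h1 : Complex.exp (Complex.I * θ) - 1 =
        Complex.mk (Real.cos θ - 1) (Real.sin θ) := by
      rw [mul_comm, Complex.exp_mul_I]
      apply Complex.ext <;>
        simp [Complex.add_re, Complex.add_im, Complex.cos_ofReal_re, Complex.sin_ofReal_re]
    have h2 : ‖Complex.exp (Complex.I * θ) - 1‖ ^ 2 = 2 - 2 * Real.cos θ := by
      rw [h1, Complex.sq_norm, Complex.normSq_mk]
      nlinarith [Real.sin_sq_add_cos_sq θ]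
    have h3 : 2 - 2 * Real.cos θ ≤ θ ^ 2 := by
      have hs : Real.sin (θ / 2) ^ 2 ≤ (θ / 2) ^ 2 := Real.sin_sq_le_sq
      have hc : Real.cos θ = 1 - 2 * Real.sin (θ / 2) ^ 2 := by
        have h := Real.cos_sq (θ / 2)
        rw [mul_div_cancel₀ θ (two_ne_zero)] at h
        nlinarith [Real.sin_sq_add_cos_sq (θ / 2)]
      nlinarith
    nlinarith [norm_nonneg (Complex.exp (Complex.I * θ) - 1), abs_nonneg θ,
      sq_abs θ, h2.le, h2.ge]
  have h4 : Complex.exp (Complex.I * a) - Complex.exp (Complex.I * b) =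
      Complex.exp (Complex.I * b) * (Complex.exp (Complex.I * ((a : ℂ) - b)) - 1) := by
    rw [mul_sub, ← Complex.exp_add, mul_one]
    ring_nf
  rw [h4, norm_mul]
  have h5 : ‖Complex.exp (Complex.I * b)‖ = 1 := by
    rw [mul_comm]; exact Complex.norm_exp_ofReal_mul_I b
  rw [h5, one_mul]
  have := key (a - b)
  rwa [Complex.ofReal_sub] at this

/-- big-endian digits equivalence -/
def Ekk {N k : ℕ} : (Fin k → Fin N) ≃ Fin (N ^ k) :=
  (Equiv.arrowCongr Fin.revPerm (Equiv.refl (Fin N))).trans finFunctionFinEquiv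

lemma Ekk_val {N k : ℕ} (α : Fin k → Fin N) :
    (Ekk α : ℕ) = ∑ i : Fin k, (α (Fin.rev i) : ℕ) * N ^ (i : ℕ) := by
  rfl

lemma xk_eq {N k : ℕ} (hN : 0 < N) (α : Fin k → Fin N) :
    xk N α = ((Ekk α : ℕ) : ℝ) / (N : ℝ) ^ k := by
  have hNr : (0:ℝ) < (N:ℝ) := by exact_mod_cast hN
  rw [Ekk_val]
  push_cast
  rw [Finset.sum_div]
  have hre : ∀ i : Fin k, ((α (Fin.rev i) : ℝ) * (N:ℝ) ^ (i:ℕ)) / (N:ℝ)^k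
      = (fun j : Fin k => (α j : ℝ) / (N : ℝ) ^ ((j : ℕ) + 1)) (Fin.rev i) := by
    intro i
    have hk : ((Fin.rev i : Fin k) : ℕ) = k - ((i : ℕ) + 1) := Fin.val_rev i
    simp only [hk]
    rw [div_eq_div_iff (by positivity) (by positivity), mul_assoc, ← pow_add]
    congr 2
    omega
  rw [Finset.sum_congr rfl (fun i _ => hre i)]
  unfold xk
  exact (Equiv.sum_comp Fin.revPerm _).symm

lemma Ik_eq {N k : ℕ} (hN : 0 < N) (α : Fin k → Fin N) :
    Ik N α = Set.Ico (((Ekk α : ℕ) : ℝ) / (N : ℝ) ^ k)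
      ((((Ekk α : ℕ) : ℝ) + 1) / (N : ℝ) ^ k) := by
  unfold Ik
  rw [xk_eq hN]
  congr 1
  rw [add_div]
  congr 1
  rw [one_div]

lemma iUnion_Ico (N k : ℕ) (hN : 0 < N) :
    (⋃ p : Fin (N ^ k), Set.Ico ((p : ℝ) / (N : ℝ) ^ k) (((p : ℝ) + 1) / (N : ℝ) ^ k))
      = Set.Ico (0:ℝ) 1 := by
  have hc : (0:ℝ) < (N:ℝ) ^ k := by positivity
  ext x
  simp only [Set.mem_iUnion, Set.mem_Ico]
  constructor
  · rintro ⟨p, h1, h2⟩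
    refine ⟨le_trans (by positivity) h1, lt_of_lt_of_le h2 ?_⟩
    rw [div_le_one hc]
    have : (p : ℕ) + 1 ≤ N ^ k := p.isLt
    exact_mod_cast this
  · rintro ⟨h0, h1⟩
    have hx : 0 ≤ x * (N:ℝ)^k := by positivity
    have hlt : ⌊x * (N:ℝ)^k⌋₊ < N ^ k := by
      rw [Nat.floor_lt hx]
      calc x * (N:ℝ)^k < 1 * (N:ℝ)^k := by nlinarith
      _ = ((N:ℝ))^k := one_mul _
      _ = ((N ^ k : ℕ) : ℝ) := by push_cast; ring
    refine ⟨⟨⌊x * (N:ℝ)^k⌋₊, hlt⟩, ?_, ?_⟩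
    · rw [div_le_iff₀ hc]
      exact Nat.floor_le hx
    · rw [lt_div_iff₀ hc]
      exact Nat.lt_floor_add_one _

lemma pairwise_Ico (c : ℝ) (hc : 0 < c) (n : ℕ) :
    Pairwise (Function.onFun Disjoint
      (fun p : Fin n => Set.Ico ((p : ℝ) / c) (((p : ℝ) + 1) / c))) := by
  have key : ∀ p q : Fin n, (p : ℕ) < (q : ℕ) →
      Disjoint (Set.Ico ((p : ℝ) / c) (((p : ℝ) + 1) / c))
        (Set.Ico ((q : ℝ) / c) (((q : ℝ) + 1) / c)) := by
    intro p q hpq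
    apply Set.Ico_disjoint_Ico.mpr
    have hle : ((p:ℝ) + 1) ≤ (q:ℝ) := by exact_mod_cast hpq
    have h1 : ((p:ℝ) + 1) / c ≤ (q:ℝ) / c := by gcongr
    exact le_trans (min_le_left _ _) (le_trans h1 (le_max_right _ _))
  intro p q hpq
  rcases lt_or_gt_of_ne (fun h => hpq (Fin.ext h) : (p:ℕ) ≠ (q:ℕ)) with h | h
  · exact key p q h
  · exact (key q p h).symm

lemma integrable_exp (m : Measure ℝ) [IsFiniteMeasure m] (s : ℝ) (u : Set ℝ) :
    IntegrableOn (fun x : ℝ => Complex.exp (Complex.I * s * x)) u m := by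
  have hcont : Continuous fun x : ℝ => Complex.exp (Complex.I * s * x) := by
    fun_prop
  refine Integrable.mono' (integrable_const 1) hcont.aestronglyMeasurable.restrict
    (ae_of_all _ fun x => ?_)
  rw [show Complex.I * s * x = ((s * x : ℝ) : ℂ) * Complex.I by push_cast; ring]
  rw [Complex.norm_exp_ofReal_mul_I]

/-- The level-`k` Riemann sum of `e^{isx}` against `m`. -/
noncomputable def RS (N : ℕ) (m : Measure ℝ) (s : ℝ) (k : ℕ) : ℂ :=
  ∑ α : Fin k → Fin N, Complex.exp (Complex.I * s * xk N α) * ((m (Ik N α)).toReal : ℂ)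

lemma approx {N : ℕ} (hN : 2 ≤ N) (m : Measure ℝ) [IsFiniteMeasure m] (s : ℝ) (k : ℕ) :
    ‖(∫ x in Set.Ico (0:ℝ) 1, Complex.exp (Complex.I * s * x) ∂m) - RS N m s k‖
      ≤ |s| * ((N : ℝ) ^ k)⁻¹ * (m Set.univ).toReal := by
  have hN0 : 0 < N := by omega
  have hc : (0:ℝ) < (N:ℝ) ^ k := by positivity
  set c := (N:ℝ) ^ k with hcdef
  set J : Fin (N ^ k) → Set ℝ := fun p => Set.Ico ((p : ℝ) / c) (((p : ℝ) + 1) / c) with hJ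
  have hJm : ∀ p, MeasurableSet (J p) := fun p => measurableSet_Ico
  have hJd : Pairwise (Function.onFun Disjoint J) := pairwise_Ico c hc _
  have hJu : ⋃ p, J p = Set.Ico (0:ℝ) 1 := iUnion_Ico N k hN0
  have hint : IntegrableOn (fun x : ℝ => Complex.exp (Complex.I * s * x))
      (⋃ p, J p) m := integrable_exp m s _
  have hdecomp : (∫ x in Set.Ico (0:ℝ) 1, Complex.exp (Complex.I * s * x) ∂m)
      = ∑ p : Fin (N ^ k), ∫ x in J p, Complex.exp (Complex.I * s * x) ∂m := by
    rw [← hJu, integral_iUnion hJm hJd hint, tsum_fintype]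
  have hsum : RS N m s k
      = ∑ p : Fin (N ^ k),
          Complex.exp (Complex.I * s * (((p:ℝ)/c : ℝ) : ℂ)) * ((m (J p)).toReal : ℂ) := by
    rw [RS, ← Equiv.sum_comp (Ekk (N := N) (k := k))
      (fun p => Complex.exp (Complex.I * s * (((p:ℝ)/c : ℝ) : ℂ)) * ((m (J p)).toReal : ℂ))]
    refine Finset.sum_congr rfl fun α _ => ?_
    rw [xk_eq hN0, Ik_eq hN0]
  rw [hdecomp, hsum, ← Finset.sum_sub_distrib]
  refine le_trans (norm_sum_le _ _) ?_
  have hterm : ∀ p : Fin (N ^ k),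
      ‖(∫ x in J p, Complex.exp (Complex.I * s * x) ∂m) -
        Complex.exp (Complex.I * s * (((p:ℝ)/c : ℝ) : ℂ)) * ((m (J p)).toReal : ℂ)‖
      ≤ |s| * c⁻¹ * (m (J p)).toReal := by
    intro p
    have hconst : Complex.exp (Complex.I * s * (((p:ℝ)/c : ℝ) : ℂ)) * ((m (J p)).toReal : ℂ)
        = ∫ _ in J p, Complex.exp (Complex.I * s * (((p:ℝ)/c : ℝ) : ℂ)) ∂m := by
      rw [setIntegral_const, Complex.real_smul, mul_comm]
      rfl
    rw [hconst, ← integral_sub (integrable_exp m s _) (integrableOn_const (lt_top_iff_ne_top.1 ?_))]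
    swap
    · exact lt_of_le_of_lt (measure_mono (Set.subset_univ _)) (measure_lt_top m _)
    refine norm_setIntegral_le_of_norm_le_const (C := |s| * c⁻¹) (measure_lt_top m _)
      fun x hx => ?_
    · rw [show Complex.I * s * x = Complex.I * ((s * x : ℝ) : ℂ) by push_cast; ring,
        show Complex.I * s * (((p:ℝ)/c : ℝ) : ℂ) = Complex.I * ((s * ((p:ℝ)/c) : ℝ) : ℂ) by
          push_cast; ring]
      refine le_trans (exp_I_lip _ _) ?_
      rw [← mul_sub, abs_mul]
      gcongr
      rcases hx with ⟨hx1, hx2⟩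
      rw [abs_le]
      constructor
      · have : (0:ℝ) ≤ x - (p:ℝ)/c := by linarith
        linarith [inv_nonneg.2 hc.le]
      · have hub : x - (p:ℝ)/c < c⁻¹ := by
          have : ((p:ℝ) + 1) / c = (p:ℝ)/c + c⁻¹ := by
            rw [add_div, one_div]
          linarith [hx2.trans_eq this]
        linarith
  refine le_trans (Finset.sum_le_sum fun p _ => hterm p) ?_
  rw [← Finset.mul_sum]
  have hsum2 : ∑ p : Fin (N ^ k), (m (J p)).toReal = (m (⋃ p, J p)).toReal := by
    rw [measure_iUnion hJd hJm, tsum_fintype,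
      ENNReal.toReal_sum fun p _ => measure_ne_top m _]
  rw [hsum2]
  exact mul_le_mul_of_nonneg_left
    (ENNReal.toReal_mono (measure_ne_top m _) (measure_mono (Set.subset_univ _)))
    (by positivity)

lemma Sw_cons {N : ℕ} (S : Fin N → H →L[ℂ] H) {k : ℕ} (j : Fin N) (α : Fin k → Fin N) :
    Sw S (Fin.cons j α) = S j ∘L Sw S α := by
  unfold Sw
  rw [List.ofFn_succ]
  simp only [Fin.cons_zero, Fin.cons_succ, List.prod_cons]
  rfl

lemma xk_cons {N k : ℕ} (hN : 0 < N) (j : Fin N) (α : Fin k → Fin N) :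
    xk N (Fin.cons j α) = ((j : ℝ) + xk N α) / (N : ℝ) := by
  have hNr : (0:ℝ) < (N:ℝ) := by exact_mod_cast hN
  unfold xk
  rw [Fin.sum_univ_succ]
  simp only [Fin.cons_zero, Fin.cons_succ, Fin.val_zero, Fin.val_succ, pow_one]
  rw [add_div, Finset.sum_div]
  congr 1
  · norm_num
  refine Finset.sum_congr rfl fun i _ => ?_
  rw [div_div, ← pow_succ]

end CuntzAux

/-- Fourier transform scaling identity: if `μ` is a spectral measure of the unit vector
`f` and `ν_j` a spectral measure of `S_j^* f`, then
`μ̂(t) = ∑_j e^{ijt/N} ν̂_j(t/N)`. -/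
theorem stmt_5 {N : ℕ} (hN : 2 ≤ N) (S : Fin N → H →L[ℂ] H) (hS : CuntzRep S)
    (f : H) (hf : ‖f‖ = 1)
    (μ : Measure ℝ) (hμ : IsSpectralMeasureR S f μ)
    (ν : Fin N → Measure ℝ)
    (hν : ∀ j : Fin N, IsSpectralMeasureR S (adjoint (S j) f) (ν j)) :
    ∀ t : ℝ,
      ∫ x in Set.Ico (0:ℝ) 1, Complex.exp (Complex.I * t * x) ∂μ =
        ∑ j : Fin N, Complex.exp (Complex.I * (j : ℝ) * t / (N : ℝ)) *
          ∫ x in Set.Ico (0:ℝ) 1, Complex.exp (Complex.I * t * x / (N : ℝ)) ∂(ν j) := by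
  intro t
  have hN0 : 0 < N := by omega
  have hNr : (0:ℝ) < (N:ℝ) := by exact_mod_cast hN0
  have hNr1 : (1:ℝ) < (N:ℝ) := by exact_mod_cast hN
  haveI hμfin : IsFiniteMeasure μ := ⟨by rw [hμ.2.1]; exact ENNReal.ofReal_lt_top⟩
  haveI hνfin : ∀ j, IsFiniteMeasure (ν j) :=
    fun j => ⟨by rw [(hν j).2.1]; exact ENNReal.ofReal_lt_top⟩
  -- the two sides
  set L : ℂ := ∫ x in Set.Ico (0:ℝ) 1, Complex.exp (Complex.I * t * x) ∂μ with hL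
  set Rt : ℂ := ∑ j : Fin N, Complex.exp (Complex.I * (j : ℝ) * t / (N : ℝ)) *
      ∫ x in Set.Ico (0:ℝ) 1, Complex.exp (Complex.I * t * x / (N : ℝ)) ∂(ν j) with hRt
  -- rewrite inner integrals
  have hint_eq : ∀ j : Fin N,
      (∫ x in Set.Ico (0:ℝ) 1, Complex.exp (Complex.I * t * x / (N : ℝ)) ∂(ν j))
      = ∫ x in Set.Ico (0:ℝ) 1, Complex.exp (Complex.I * ((t / (N:ℝ) : ℝ) : ℂ) * x) ∂(ν j) := by
    intro j
    have hfun : (fun x : ℝ => Complex.exp (Complex.I * t * x / (N:ℝ)))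
        = fun x : ℝ => Complex.exp (Complex.I * ((t / (N:ℝ) : ℝ) : ℂ) * x) := by
      funext x
      rw [show Complex.I * t * x / (N:ℝ) = Complex.I * ((t / (N:ℝ) : ℝ) : ℂ) * x by
        push_cast; ring]
    rw [hfun]
  -- measure matching
  have hmeasEq : ∀ (k : ℕ), 1 ≤ k → ∀ (j : Fin N) (α : Fin k → Fin N),
      μ (Ik N (Fin.cons j α)) = ν j (Ik N α) := by
    intro k hk j α
    rw [hμ.2.2 (k+1) (by omega) (Fin.cons j α), (hν j).2.2 k hk α,
      CuntzAux.Sw_cons S j α, adjoint_comp]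
    simp [ContinuousLinearMap.comp_apply]
  -- recursion
  have hrec : ∀ k : ℕ, 1 ≤ k → CuntzAux.RS N μ t (k+1)
      = ∑ j : Fin N, Complex.exp (Complex.I * (j:ℝ) * t / (N:ℝ)) *
          CuntzAux.RS N (ν j) (t / (N:ℝ)) k := by
    intro k hk
    rw [CuntzAux.RS, ← Equiv.sum_comp (Fin.consEquiv fun _ => Fin N)
      (fun β : Fin (k+1) → Fin N =>
        Complex.exp (Complex.I * t * xk N β) * ((μ (Ik N β)).toReal : ℂ)),
      Fintype.sum_prod_type]
    refine Finset.sum_congr rfl fun j _ => ?_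
    rw [CuntzAux.RS, Finset.mul_sum]
    refine Finset.sum_congr rfl fun α _ => ?_
    have h1 : (Fin.consEquiv fun _ => Fin N) (j, α) = Fin.cons j α := rfl
    rw [h1, hmeasEq k hk j α, CuntzAux.xk_cons hN0 j α,
      show Complex.I * t * ((((j:ℝ) + xk N α) / (N:ℝ) : ℝ) : ℂ)
        = Complex.I * (j:ℝ) * t / (N:ℝ) + Complex.I * ((t / (N:ℝ) : ℝ) : ℂ) * (xk N α : ℝ) by
          push_cast
          field_simp,
      Complex.exp_add, mul_assoc]
  -- constant
  set B : ℝ := (μ Set.univ).toReal + ∑ j : Fin N, ((ν j) Set.univ).toReal with hB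
  have hBnn : ∀ j : Fin N, 0 ≤ ((ν j) Set.univ).toReal := fun j => ENNReal.toReal_nonneg
  -- the key bound
  have hbound : ∀ k : ℕ, 1 ≤ k → ‖L - Rt‖ ≤ |t| * ((N:ℝ)^k)⁻¹ * B := by
    intro k hk
    have hck : (0:ℝ) < (N:ℝ)^k := by positivity
    have hck1 : (0:ℝ) < (N:ℝ)^(k+1) := by positivity
    have h1 : ‖L - CuntzAux.RS N μ t (k+1)‖
        ≤ |t| * ((N:ℝ)^(k+1))⁻¹ * (μ Set.univ).toReal := CuntzAux.approx hN μ t (k+1)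
    have h2 : ‖CuntzAux.RS N μ t (k+1) - Rt‖
        ≤ ∑ j : Fin N, |t / (N:ℝ)| * ((N:ℝ)^k)⁻¹ * ((ν j) Set.univ).toReal := by
      rw [hrec k hk, hRt]
      rw [← Finset.sum_sub_distrib]
      refine le_trans (norm_sum_le _ _) (Finset.sum_le_sum fun j _ => ?_)
      rw [← mul_sub, norm_mul]
      have he : ‖Complex.exp (Complex.I * (j:ℝ) * t / (N:ℝ))‖ = 1 := by
        rw [show Complex.I * (j:ℝ) * t / (N:ℝ) = (((j:ℝ) * t / (N:ℝ) : ℝ) : ℂ) * Complex.I by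
          push_cast; ring]
        exact Complex.norm_exp_ofReal_mul_I _
      rw [he, one_mul, hint_eq j, norm_sub_rev]
      exact CuntzAux.approx hN (ν j) (t / (N:ℝ)) k
    calc ‖L - Rt‖ ≤ ‖L - CuntzAux.RS N μ t (k+1)‖ + ‖CuntzAux.RS N μ t (k+1) - Rt‖ := by
          have : L - Rt = (L - CuntzAux.RS N μ t (k+1)) + (CuntzAux.RS N μ t (k+1) - Rt) := by
            ring
          rw [this]
          exact norm_add_le _ _
      _ ≤ |t| * ((N:ℝ)^(k+1))⁻¹ * (μ Set.univ).toReal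
            + ∑ j : Fin N, |t / (N:ℝ)| * ((N:ℝ)^k)⁻¹ * ((ν j) Set.univ).toReal :=
          add_le_add h1 h2
      _ ≤ |t| * ((N:ℝ)^k)⁻¹ * (μ Set.univ).toReal
            + ∑ j : Fin N, |t| * ((N:ℝ)^k)⁻¹ * ((ν j) Set.univ).toReal := by
          refine add_le_add ?_ (Finset.sum_le_sum fun j _ => ?_)
          · refine mul_le_mul_of_nonneg_right ?_ ENNReal.toReal_nonneg
            refine mul_le_mul_of_nonneg_left ?_ (abs_nonneg t)
            exact inv_anti₀ hck (pow_le_pow_right₀ hNr1.le (by omega))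
          · refine mul_le_mul_of_nonneg_right ?_ ENNReal.toReal_nonneg
            refine mul_le_mul_of_nonneg_right ?_ (by positivity)
            rw [abs_div, abs_of_pos hNr]
            exact div_le_self (abs_nonneg t) hNr1.le
      _ = |t| * ((N:ℝ)^k)⁻¹ * B := by
          rw [hB, ← Finset.mul_sum, mul_add]
  -- limit
  have hlim : Filter.Tendsto (fun k : ℕ => |t| * ((N:ℝ)^k)⁻¹ * B) Filter.atTop (nhds 0) := by
    have h0 : Filter.Tendsto (fun k : ℕ => ((N:ℝ)⁻¹)^k) Filter.atTop (nhds 0) :=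
      tendsto_pow_atTop_nhds_zero_of_lt_one (by positivity) (inv_lt_one_of_one_lt₀ hNr1)
    have : (fun k : ℕ => |t| * ((N:ℝ)^k)⁻¹ * B) = fun k => |t| * ((N:ℝ)⁻¹)^k * B := by
      funext k
      rw [inv_pow]
    rw [this]
    simpa using (h0.const_mul |t|).mul_const B
  have hle : ‖L - Rt‖ ≤ 0 := by
    refine ge_of_tendsto hlim ?_
    filter_upwards [Filter.eventually_ge_atTop 1] with k hk
    exact hbound k hk
  have : L - Rt = 0 := by
    rw [← norm_le_zero_iff]
    exact hle
  exact sub_eq_zero.mp this
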